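/- For every real z with z < 0 or z > 2 one has the representation b(z) = (1/π) ∫_0^π cos² q / ((z−1)² − cos² q) dq, and consequently b(z) > 0. -/

import Mathlib

open MeasureTheory Real Filter Topology Asymptotics

/-- `a(z) = (1/2π)∫_{−π}^{π} dq/(z − 1 + cos q)`. -/
noncomputable def aF (z : ℝ) : ℝ :=
  (2 * Real.pi)⁻¹ * ∫ q in (-Real.pi)..Real.pi, (z - 1 + Real.cos q)⁻¹

/-- `b(z) = −(1/2π)∫_{−π}^{π} cos q dq/(z − 1 + cos q)`. -/
noncomputable def bF (z : ℝ) : ℝ :=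
  -((2 * Real.pi)⁻¹ * ∫ q in (-Real.pi)..Real.pi, Real.cos q / (z - 1 + Real.cos q))

/-- `c(z) = (1/2π)∫_{−π}^{π} cos² q dq/(z − 1 + cos q)`. -/
noncomputable def cF (z : ℝ) : ℝ :=
  (2 * Real.pi)⁻¹ * ∫ q in (-Real.pi)..Real.pi, (Real.cos q) ^ 2 / (z - 1 + Real.cos q)

/-- The Fredholm determinant `Δ(μ,λ;z) = (1 − μ a(z))(1 − λ c(z)) − μλ b(z)²`. -/
noncomputable def Δdet (μ lam z : ℝ) : ℝ :=
  (1 - μ * aF z) * (1 - lam * cF z) - μ * lam * (bF z) ^ 2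

private lemma aux_pt (w c : ℝ) (h1 : w + c ≠ 0) (h2 : w - c ≠ 0)
    (h3 : w ^ 2 - c ^ 2 ≠ 0) :
    c / (w + c) + -c / (w + -c) = -2 * (c ^ 2 / (w ^ 2 - c ^ 2)) := by
  have hD : (w + c) * (w - c) ≠ 0 := mul_ne_zero h1 h2
  rw [show w + -c = w - c by ring, show w ^ 2 - c ^ 2 = (w + c) * (w - c) by ring,
    div_add_div _ _ h1 h2, ← mul_div_assoc, div_eq_div_iff hD hD]
  ring

/-- For every real `z` with `z < 0` or `z > 2` one has
`b(z) = (1/π) ∫_0^π cos² q / ((z−1)² − cos² q) dq`, and consequently `b(z) > 0`. -/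
theorem bF_repr_and_pos (z : ℝ) (hz : z < 0 ∨ 2 < z) :
    bF z = Real.pi⁻¹ * ∫ q in (0:ℝ)..Real.pi,
        (Real.cos q) ^ 2 / ((z - 1) ^ 2 - (Real.cos q) ^ 2) ∧
    0 < bF z := by
  set w := z - 1 with hw
  have hw2 : 1 < w ^ 2 := by
    rcases hz with h | h
    · nlinarith
    · nlinarith
  have hpos : ∀ q : ℝ, 0 < w ^ 2 - Real.cos q ^ 2 := by
    intro q
    have := Real.neg_one_le_cos q
    have := Real.cos_le_one q
    nlinarith
  have hne1 : ∀ q : ℝ, w + Real.cos q ≠ 0 := by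
    intro q h
    have h0 : Real.cos q = -w := by linarith
    have h4 : w ^ 2 - Real.cos q ^ 2 = 0 := by rw [h0]; ring
    have := hpos q; linarith
  have hne2 : ∀ q : ℝ, w - Real.cos q ≠ 0 := by
    intro q h
    have h0 : Real.cos q = w := by linarith
    have h4 : w ^ 2 - Real.cos q ^ 2 = 0 := by rw [h0]; ring
    have := hpos q; linarith
  set f : ℝ → ℝ := fun q => Real.cos q / (w + Real.cos q) with hf
  set g : ℝ → ℝ := fun q => Real.cos q ^ 2 / (w ^ 2 - Real.cos q ^ 2) with hg
  have hfc : Continuous f := by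
    apply Continuous.div (by continuity) (by continuity)
    intro q; exact hne1 q
  have hgc : Continuous g := by
    apply Continuous.div (by continuity) (by continuity)
    intro q; exact (hpos q).ne'
  -- step 1: even symmetry
  have h1 : (∫ q in (-Real.pi)..Real.pi, f q) = 2 * ∫ q in (0:ℝ)..Real.pi, f q := by
    have := intervalIntegral.integral_comp_neg (a := (0:ℝ)) (b := Real.pi) f
    simp only [neg_zero] at this
    have heven : (∫ q in (0:ℝ)..Real.pi, f (-q)) = ∫ q in (0:ℝ)..Real.pi, f q := by
      apply intervalIntegral.integral_congr
      intro q _; simp [hf, Real.cos_neg]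
    have hsplit : (∫ q in (-Real.pi)..Real.pi, f q)
        = (∫ q in (-Real.pi)..(0:ℝ), f q) + ∫ q in (0:ℝ)..Real.pi, f q := by
      rw [intervalIntegral.integral_add_adjacent_intervals] <;>
        exact hfc.intervalIntegrable _ _
    rw [hsplit, ← this, heven]; ring
  -- step 2: reflection q ↦ π − q
  have h2 : (2:ℝ) * ∫ q in (0:ℝ)..Real.pi, f q
      = ∫ q in (0:ℝ)..Real.pi, (-2) * g q := by
    have hrefl : (∫ q in (0:ℝ)..Real.pi, f (Real.pi - q)) = ∫ q in (0:ℝ)..Real.pi, f q := by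
      have := intervalIntegral.integral_comp_sub_left (a := (0:ℝ)) (b := Real.pi) f Real.pi
      simpa using this -- reflection
    have hadd : (∫ q in (0:ℝ)..Real.pi, (f q + f (Real.pi - q)))
        = (∫ q in (0:ℝ)..Real.pi, f q) + ∫ q in (0:ℝ)..Real.pi, f (Real.pi - q) := by
      apply intervalIntegral.integral_add (hfc.intervalIntegrable _ _)
      exact (hfc.comp (by continuity)).intervalIntegrable _ _
    have hpt : ∀ q : ℝ, f q + f (Real.pi - q) = (-2) * g q := by
      intro q
      simp only [hf, hg, Real.cos_pi_sub]
      exact aux_pt w (Real.cos q) (hne1 q) (hne2 q) (hpos q).ne'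
    calc (2:ℝ) * ∫ q in (0:ℝ)..Real.pi, f q
        = (∫ q in (0:ℝ)..Real.pi, f q) + ∫ q in (0:ℝ)..Real.pi, f (Real.pi - q) := by
          rw [hrefl]; ring
      _ = ∫ q in (0:ℝ)..Real.pi, (f q + f (Real.pi - q)) := hadd.symm
      _ = ∫ q in (0:ℝ)..Real.pi, (-2) * g q := by
          apply intervalIntegral.integral_congr
          intro q _; exact hpt q
  have hI : (∫ q in (-Real.pi)..Real.pi, f q) = -2 * ∫ q in (0:ℝ)..Real.pi, g q := by
    rw [h1, h2, intervalIntegral.integral_const_mul]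
  have hrepr : bF z = Real.pi⁻¹ * ∫ q in (0:ℝ)..Real.pi, g q := by
    have hbF : bF z = -((2 * Real.pi)⁻¹ * ∫ q in (-Real.pi)..Real.pi, f q) := rfl
    rw [hbF, hI]
    have hπ : Real.pi ≠ 0 := Real.pi_ne_zero
    field_simp
  -- positivity
  have hIg : 0 < ∫ q in (0:ℝ)..Real.pi, g q := by
    have hsplit : (∫ q in (0:ℝ)..Real.pi, g q)
        = (∫ q in (0:ℝ)..(Real.pi/2), g q) + ∫ q in (Real.pi/2)..Real.pi, g q := by
      rw [intervalIntegral.integral_add_adjacent_intervals] <;>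
        exact hgc.intervalIntegrable _ _
    have hp1 : 0 < ∫ q in (0:ℝ)..(Real.pi/2), g q := by
      apply intervalIntegral.intervalIntegral_pos_of_pos_on (hgc.intervalIntegrable _ _)
      · intro q hq
        have hcos : 0 < Real.cos q := Real.cos_pos_of_mem_Ioo
          ⟨by linarith [hq.1, Real.pi_pos], hq.2⟩
        exact div_pos (by positivity) (hpos q)
      · linarith [Real.pi_pos]
    have hp2 : 0 ≤ ∫ q in (Real.pi/2)..Real.pi, g q := by
      apply intervalIntegral.integral_nonneg (by linarith [Real.pi_pos])
      intro q _
      exact div_nonneg (sq_nonneg _) (hpos q).le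
    rw [hsplit]; linarith
  refine ⟨hrepr, ?_⟩
  rw [hrepr]
  exact mul_pos (inv_pos.mpr Real.pi_pos) hIg
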